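/- (Sharpened form) For every finite set J and every f: {0,1}^J → ℝ, Var(f) ≤ 3 Σ_{j∈J} ‖f_j‖_2^2 · (1 - (‖f_j‖_1/‖f_j‖_2)^{6/5}) / log(‖f_j‖_2/‖f_j‖_1), where f_j := (f - f∘σ_j)/2, with the j-th summand interpreted as (6/5)‖f_j‖_2^2 when ‖f_j‖_1 = ‖f_j‖_2, and as 0 when f_j ≡ 0. -/

import Mathlib

open Finset

/-- Expectation with respect to the uniform measure on `{0,1}^J`. -/
noncomputable def hcExp {J : Type*} [Fintype J] [DecidableEq J] (f : (J → Bool) → ℝ) : ℝ :=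
  (∑ x : J → Bool, f x) / 2 ^ Fintype.card J

/-- The Walsh function `u_S(ω) = (-1)^{Σ_{s∈S} ω_s}`. -/
def walsh {J : Type*} (S : Finset J) (x : J → Bool) : ℝ :=
  (-1 : ℝ) ^ (S.filter fun s => x s = true).card

/-- The Fourier-Walsh coefficient `\hat f(S) = E[f ⬝ u_S]`. -/
noncomputable def fcoef {J : Type*} [Fintype J] [DecidableEq J] (f : (J → Bool) → ℝ) (S : Finset J) : ℝ :=
  hcExp fun x => f x * walsh S x

/-- The discrete derivative `ρ_j f = (f - f∘σ_j)/2`, where `σ_j` flips coordinate `j`. -/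
noncomputable def rhoD {J : Type*} [DecidableEq J] (j : J) (f : (J → Bool) → ℝ) :
    (J → Bool) → ℝ :=
  fun x => (f x - f (Function.update x j (!x j))) / 2

/-- The `L^q` norm with respect to the uniform measure on `{0,1}^J`. -/
noncomputable def lqNorm {J : Type*} [Fintype J] [DecidableEq J] (q : ℝ)
    (f : (J → Bool) → ℝ) : ℝ :=
  (hcExp fun x => |f x| ^ q) ^ (1 / q)

/-- The variance with respect to the uniform measure on `{0,1}^J`. -/
noncomputable def hcVar {J : Type*} [Fintype J] [DecidableEq J]
    (f : (J → Bool) → ℝ) : ℝ :=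
  hcExp fun x => (f x - hcExp f) ^ 2

namespace Stmt9

set_option linter.unusedSectionVars false

variable {J : Type*} [Fintype J] [DecidableEq J]

/-- flip coordinate j -/
def hflip (j : J) (x : J → Bool) : J → Bool := Function.update x j (!x j)

lemma hflip_apply_self (j : J) (x : J → Bool) : hflip j x j = !x j := by
  simp [hflip]

lemma hflip_apply_ne (j i : J) (x : J → Bool) (h : i ≠ j) : hflip j x i = x i := by
  simp [hflip, Function.update_of_ne h]

lemma hflip_hflip (j : J) (x : J → Bool) : hflip j (hflip j x) = x := by
  funext i
  by_cases h : i = j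
  · subst h; simp [hflip]
  · simp [hflip, Function.update_of_ne h]

lemma hflip_bijective (j : J) : Function.Bijective (hflip (J := J) j) :=
  Function.Involutive.bijective (hflip_hflip j)

lemma two_pow_card_pos : (0:ℝ) < 2 ^ Fintype.card J := by positivity

set_option linter.unusedSectionVars false

lemma hcExp_const (c : ℝ) : hcExp (fun _ : J → Bool => c) = c := by
  simp [hcExp, Finset.sum_const, Fintype.card_fun]

lemma hcExp_add (f g : (J → Bool) → ℝ) :
    hcExp (fun x => f x + g x) = hcExp f + hcExp g := by
  simp [hcExp, Finset.sum_add_distrib, add_div]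

lemma hcExp_sub (f g : (J → Bool) → ℝ) :
    hcExp (fun x => f x - g x) = hcExp f - hcExp g := by
  simp [hcExp, Finset.sum_sub_distrib, sub_div]

lemma hcExp_smul (c : ℝ) (f : (J → Bool) → ℝ) :
    hcExp (fun x => c * f x) = c * hcExp f := by
  simp [hcExp, ← Finset.mul_sum, mul_div_assoc]

lemma hcExp_sum {ι : Type*} (s : Finset ι) (f : ι → (J → Bool) → ℝ) :
    hcExp (fun x => ∑ i ∈ s, f i x) = ∑ i ∈ s, hcExp (f i) := by
  unfold hcExp
  rw [← Finset.sum_div, Finset.sum_comm]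

lemma hcExp_nonneg {f : (J → Bool) → ℝ} (h : ∀ x, 0 ≤ f x) : 0 ≤ hcExp f := by
  apply div_nonneg _ (by positivity)
  exact Finset.sum_nonneg fun x _ => h x

lemma hcExp_mono {f g : (J → Bool) → ℝ} (h : ∀ x, f x ≤ g x) : hcExp f ≤ hcExp g := by
  apply div_le_div_of_nonneg_right (c := (2:ℝ) ^ Fintype.card J) _ two_pow_card_pos.le
  exact Finset.sum_le_sum fun x _ => h x

lemma hcExp_comp_hflip (j : J) (f : (J → Bool) → ℝ) :
    hcExp (fun x => f (hflip j x)) = hcExp f := by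
  unfold hcExp
  congr 1
  exact Function.Bijective.sum_comp (hflip_bijective j) f


lemma filter_symmDiff' (p : J → Prop) [DecidablePred p] (S T : Finset J) :
    (symmDiff S T).filter p = symmDiff (S.filter p) (T.filter p) := by
  ext a
  simp only [Finset.mem_filter, Finset.mem_symmDiff]
  tauto

lemma neg_one_pow_symmDiff (A B : Finset J) :
    ((-1 : ℝ) ^ A.card) * (-1) ^ B.card = (-1) ^ (symmDiff A B).card := by
  have h1 : (symmDiff A B).card + (A ∩ B).card = (A ∪ B).card := by
    rw [symmDiff_eq_sup_sdiff_inf]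
    exact Finset.card_sdiff_add_card_eq_card (Finset.inter_subset_union)
  have h2 : (A ∩ B).card + (A ∪ B).card = A.card + B.card :=
    Finset.card_inter_add_card_union A B
  have : A.card + B.card = (symmDiff A B).card + 2 * (A ∩ B).card := by omega
  rw [← pow_add, this, pow_add, pow_mul]
  simp

lemma walsh_empty (x : J → Bool) : walsh (∅ : Finset J) x = 1 := by simp [walsh]

lemma walsh_sq (S : Finset J) (x : J → Bool) : walsh S x * walsh S x = 1 := by
  unfold walsh
  rw [← pow_add]
  exact Even.neg_one_pow ⟨_, rfl⟩

lemma walsh_mul (S T : Finset J) (x : J → Bool) :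
    walsh S x * walsh T x = walsh (symmDiff S T) x := by
  unfold walsh
  rw [neg_one_pow_symmDiff, filter_symmDiff']

lemma walsh_mul_point (S : Finset J) (x y : J → Bool) :
    walsh S x * walsh S y = walsh S (fun i => xor (x i) (y i)) := by
  unfold walsh
  rw [neg_one_pow_symmDiff]
  congr 2
  ext a
  simp only [Finset.mem_symmDiff, Finset.mem_filter]
  cases hx : x a <;> cases hy : y a <;> simp [hx, hy]

lemma walsh_congr (S : Finset J) {x y : J → Bool} (h : ∀ i ∈ S, x i = y i) :
    walsh S x = walsh S y := by
  unfold walsh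
  congr 2
  apply Finset.filter_congr
  intro a ha
  simp [h a ha]

lemma walsh_hflip (j : J) (S : Finset J) (x : J → Bool) :
    walsh S (hflip j x) = (if j ∈ S then -1 else 1) * walsh S x := by
  by_cases hj : j ∈ S
  · simp only [hj, if_true]
    have hrw : S = insert j (S.erase j) := (Finset.insert_erase hj).symm
    have hje : j ∉ S.erase j := Finset.notMem_erase j S
    have hcongr : ∀ z : J → Bool, ((S.erase j).filter fun s => z s = true) =
        ((S.erase j).filter fun s => hflip j z s = true) := by
      intro z
      apply Finset.filter_congr
      intro a ha
      rw [hflip_apply_ne j a z (Finset.ne_of_mem_erase ha)]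
    unfold walsh
    rw [hrw, Finset.filter_insert, Finset.filter_insert]
    rcases hxj : x j with _ | _
    · -- x j = false, hflip j x j = true
      rw [if_pos (by simp [hflip_apply_self, hxj]), if_neg (by simp [hxj]),
        ← hcongr x,
        Finset.card_insert_of_notMem (fun h => hje (Finset.mem_of_mem_filter _ h)),
        pow_succ]
      ring
    · rw [if_neg (by simp [hflip_apply_self, hxj]), if_pos (by simp [hxj]),
        ← hcongr x,
        Finset.card_insert_of_notMem (fun h => hje (Finset.mem_of_mem_filter _ h)),
        pow_succ]
      ring
  · simp only [hj, if_false, one_mul]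
    apply walsh_congr
    intro i hi
    exact hflip_apply_ne j i x (fun h => hj (h ▸ hi))

lemma hcExp_walsh (S : Finset J) : hcExp (walsh S) = if S = ∅ then 1 else 0 := by
  by_cases hS : S = ∅
  · subst hS
    rw [if_pos rfl, show walsh (∅ : Finset J) = fun _ => (1:ℝ) from funext walsh_empty,
      hcExp_const]
  · rw [if_neg hS]
    obtain ⟨j, hj⟩ := Finset.nonempty_iff_ne_empty.mpr hS
    have h1 : hcExp (walsh S) = hcExp (fun x => walsh S (hflip j x)) :=
      (hcExp_comp_hflip j (walsh S)).symm
    have h2 : hcExp (fun x => walsh S (hflip j x)) = - hcExp (walsh S) := by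
      have : (fun x => walsh S (hflip j x)) = fun x => (-1) * walsh S x := by
        funext x; rw [walsh_hflip, if_pos hj]
      rw [this, hcExp_smul]
      ring
    have := h1.trans h2
    linarith

lemma hcExp_walsh_mul (S T : Finset J) :
    hcExp (fun x => walsh S x * walsh T x) = if S = T then 1 else 0 := by
  have : (fun x => walsh S x * walsh T x) = walsh (symmDiff S T) := by
    funext x; rw [walsh_mul]
  rw [this, hcExp_walsh]
  congr 1
  simp [symmDiff_eq_bot]

lemma fcoef_walsh (T S : Finset J) : fcoef (walsh T) S = if T = S then 1 else 0 := by
  rw [fcoef, hcExp_walsh_mul]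

lemma fcoef_smul_walsh (c : ℝ) (T S : Finset J) :
    fcoef (fun x => c * walsh T x) S = if T = S then c else 0 := by
  unfold fcoef
  have : (fun x => (c * walsh T x) * walsh S x) = fun x => c * (walsh T x * walsh S x) := by
    funext x; ring
  rw [this, hcExp_smul, hcExp_walsh_mul]
  split <;> simp

lemma fcoef_sum {ι : Type*} (s : Finset ι) (f : ι → (J → Bool) → ℝ) (S : Finset J) :
    fcoef (fun x => ∑ i ∈ s, f i x) S = ∑ i ∈ s, fcoef (f i) S := by
  unfold fcoef
  rw [← hcExp_sum]
  congr 1; funext x; rw [Finset.sum_mul]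

lemma sum_walsh (z : J → Bool) :
    (∑ S : Finset J, walsh S z) = if z = (fun _ => false) then (2:ℝ) ^ Fintype.card J else 0 := by
  by_cases hz : z = (fun _ => false)
  · subst hz
    rw [if_pos rfl]
    have : ∀ S : Finset J, walsh S (fun _ => false) = 1 := by
      intro S; unfold walsh
      rw [Finset.filter_false_of_mem (by intro a _; simp), Finset.card_empty, pow_zero]
    rw [Finset.sum_congr rfl (fun S _ => this S), Finset.sum_const]
    simp [Finset.card_univ, Fintype.card_finset]
  · rw [if_neg hz]
    have ⟨j, hj⟩ : ∃ j, z j = true := by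
      by_contra h
      push_neg at h
      exact hz (funext fun i => by simpa using h i)
    apply Finset.sum_ninvolution (fun S => symmDiff S {j})
    · intro S
      rw [show walsh (symmDiff S {j}) z = walsh S z * walsh {j} z from (walsh_mul S {j} z).symm]
      have : walsh {j} z = -1 := by
        unfold walsh
        rw [Finset.filter_true_of_mem (by intro a ha; simp [Finset.mem_singleton.mp ha ▸ hj])]
        simp
      rw [this]; ring
    · intro S _
      intro h
      have := congrArg (j ∈ ·) h
      simp [Finset.mem_symmDiff] at this
    · intro S
      exact Finset.mem_univ _
    · intro S
      exact symmDiff_symmDiff_cancel_right {j} S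

lemma hcExp_mul_const (f : (J → Bool) → ℝ) (c : ℝ) :
    hcExp (fun x => f x * c) = hcExp f * c := by
  rw [mul_comm, ← hcExp_smul]
  simp [mul_comm]

lemma xor_eq_false_iff (x y : J → Bool) :
    ((fun i => xor (x i) (y i)) = (fun _ => false)) ↔ x = y := by
  constructor
  · intro h
    funext i
    have := congrFun h i
    revert this
    cases x i <;> cases y i <;> simp
  · intro h
    subst h
    funext i
    simp

lemma fourier_inversion (f : (J → Bool) → ℝ) (x : J → Bool) :
    ∑ S : Finset J, fcoef f S * walsh S x = f x := by
  have step1 : ∀ S : Finset J, fcoef f S * walsh S x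
      = hcExp (fun y => f y * (walsh S y * walsh S x)) := by
    intro S
    rw [fcoef, ← hcExp_mul_const]
    congr 1; funext y; ring
  rw [Finset.sum_congr rfl (fun S _ => step1 S), ← hcExp_sum]
  have step2 : (fun y => ∑ S : Finset J, f y * (walsh S y * walsh S x))
      = fun y => f y * (if y = x then (2:ℝ) ^ Fintype.card J else 0) := by
    funext y
    rw [← Finset.mul_sum]
    congr 1
    rw [Finset.sum_congr rfl (fun S _ => walsh_mul_point S y x), sum_walsh]
    exact if_congr (xor_eq_false_iff y x) rfl rfl
  rw [step2]
  unfold hcExp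
  rw [Finset.sum_congr rfl (fun y _ => mul_ite (y = x) (f y) ((2:ℝ) ^ Fintype.card J) 0),
    Finset.sum_congr rfl (fun y _ => by rw [mul_zero]),
    Finset.sum_ite_eq' Finset.univ x (fun y => f y * (2:ℝ) ^ Fintype.card J),
    if_pos (Finset.mem_univ x)]
  field_simp

lemma hcExp_mul_eq (f g : (J → Bool) → ℝ) :
    hcExp (fun x => f x * g x) = ∑ S : Finset J, fcoef f S * fcoef g S := by
  have : ∀ S : Finset J, fcoef f S * fcoef g S
      = hcExp (fun x => fcoef f S * walsh S x * g x) := by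
    intro S
    rw [show fcoef g S = hcExp (fun x => g x * walsh S x) from rfl, ← hcExp_smul]
    congr 1; funext y; ring
  rw [Finset.sum_congr rfl (fun S _ => this S), ← hcExp_sum]
  congr 1
  funext y
  rw [← Finset.sum_mul, fourier_inversion]


lemma fcoef_sub (f g : (J → Bool) → ℝ) (S : Finset J) :
    fcoef (fun x => f x - g x) S = fcoef f S - fcoef g S := by
  unfold fcoef
  rw [← hcExp_sub]
  congr 1; funext x; ring

lemma fcoef_const (c : ℝ) (S : Finset J) :
    fcoef (fun _ => c) S = if S = ∅ then c else 0 := by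
  unfold fcoef
  have : (fun x => c * walsh S x) = fun x => c * walsh S x := rfl
  rw [show (fun x => (fun _ => c) x * walsh S x) = (fun x => c * walsh S x) from rfl,
    hcExp_smul, hcExp_walsh]
  split <;> simp

lemma fcoef_empty (f : (J → Bool) → ℝ) : fcoef f ∅ = hcExp f := by
  unfold fcoef
  congr 1; funext x; rw [walsh_empty, mul_one]

lemma hcExp_sq_eq (f : (J → Bool) → ℝ) :
    hcExp (fun x => f x ^ 2) = ∑ S : Finset J, (fcoef f S) ^ 2 := by
  have h := hcExp_mul_eq f f
  calc hcExp (fun x => f x ^ 2) = hcExp (fun x => f x * f x) := by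
        congr 1; funext x; ring
    _ = ∑ S : Finset J, fcoef f S * fcoef f S := h
    _ = ∑ S : Finset J, (fcoef f S) ^ 2 := by
        apply Finset.sum_congr rfl; intro S _; ring

lemma hcVar_eq (f : (J → Bool) → ℝ) :
    hcVar f = ∑ S : Finset J, (if S = ∅ then 0 else (fcoef f S) ^ 2) := by
  unfold hcVar
  have hh : (fun x => (f x - hcExp f) ^ 2) = fun x => (fun x => f x - hcExp f) x ^ 2 := rfl
  rw [hh, hcExp_sq_eq]
  apply Finset.sum_congr rfl
  intro S _
  have : fcoef (fun x => f x - hcExp f) S = fcoef f S - (if S = ∅ then hcExp f else 0) := by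
    rw [fcoef_sub, fcoef_const]
  rw [this]
  by_cases hS : S = ∅
  · subst hS; simp [fcoef_empty]
  · simp [hS]

lemma fcoef_comp_hflip (j : J) (f : (J → Bool) → ℝ) (S : Finset J) :
    fcoef (fun x => f (hflip j x)) S = (if j ∈ S then -1 else 1) * fcoef f S := by
  unfold fcoef
  have h1 : hcExp (fun x => f (hflip j x) * walsh S x)
      = hcExp (fun x => f x * walsh S (hflip j x)) := by
    rw [← hcExp_comp_hflip j (fun x => f x * walsh S (hflip j x))]
    congr 1
    funext x
    rw [hflip_hflip]
  rw [h1]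
  have h2 : (fun x => f x * walsh S (hflip j x))
      = fun x => (if j ∈ S then (-1:ℝ) else 1) * (f x * walsh S x) := by
    funext x
    rw [walsh_hflip]
    ring
  rw [h2, hcExp_smul]

lemma fcoef_rhoD (j : J) (f : (J → Bool) → ℝ) (S : Finset J) :
    fcoef (rhoD j f) S = if j ∈ S then fcoef f S else 0 := by
  have : rhoD j f = fun x => (f x - f (hflip j x)) / 2 := rfl
  rw [this]
  have h2 : (fun x => (f x - f (hflip j x)) / 2)
      = fun x => (1/2 : ℝ) * ((fun y => f y - f (hflip j y)) x) := by
    funext x; ring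
  rw [h2]
  have h3 : fcoef (fun x => (1/2 : ℝ) * ((fun y => f y - f (hflip j y)) x)) S
      = (1/2 : ℝ) * fcoef (fun y => f y - f (hflip j y)) S := by
    unfold fcoef
    rw [← hcExp_smul]
    congr 1; funext x; ring
  rw [h3, fcoef_sub, fcoef_comp_hflip]
  by_cases hj : j ∈ S
  · simp only [hj, if_true]; ring
  · simp only [hj, if_false]; ring

lemma fcoef_invariant_eq_zero {f : (J → Bool) → ℝ} {j : J}
    (hf : ∀ x, f (hflip j x) = f x) {S : Finset J} (hj : j ∈ S) : fcoef f S = 0 := by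
  have h := fcoef_comp_hflip j f S
  rw [if_pos hj] at h
  have : (fun x => f (hflip j x)) = f := funext hf
  rw [this] at h
  linarith

/-- variance = sum over j of the per-coordinate quantity -/
lemma hcVar_eq_sum_rhoD (f : (J → Bool) → ℝ) :
    hcVar f = ∑ j : J, ∑ S : Finset J, (fcoef (rhoD j f) S) ^ 2 / (S.card : ℝ) := by
  rw [hcVar_eq]
  rw [Finset.sum_comm]
  apply Finset.sum_congr rfl
  intro S _
  have hterm : ∀ j : J, (fcoef (rhoD j f) S) ^ 2 / (S.card : ℝ)
      = if j ∈ S then (fcoef f S) ^ 2 / (S.card : ℝ) else 0 := by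
    intro j
    rw [fcoef_rhoD]
    by_cases hj : j ∈ S <;> simp [hj]
  rw [Finset.sum_congr rfl (fun j _ => hterm j)]
  rw [Finset.sum_ite_mem, Finset.univ_inter, Finset.sum_const]
  by_cases hS : S = ∅
  · subst hS; simp
  · rw [if_neg hS]
    have hc : (0:ℝ) < (S.card : ℝ) := by
      have := Finset.card_pos.mpr (Finset.nonempty_iff_ne_empty.mpr hS)
      exact_mod_cast this
    rw [nsmul_eq_mul]
    field_simp


lemma fcoef_add (f g : (J → Bool) → ℝ) (S : Finset J) :
    fcoef (fun x => f x + g x) S = fcoef f S + fcoef g S := by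
  unfold fcoef
  rw [← hcExp_add]
  congr 1; funext x; ring

def DependsOn (f : (J → Bool) → ℝ) (U : Finset J) : Prop :=
  ∀ x y, (∀ i ∈ U, x i = y i) → f x = f y

lemma dependsOn_univ (f : (J → Bool) → ℝ) : DependsOn f Finset.univ :=
  fun x y h => by
    have : x = y := funext fun i => h i (Finset.mem_univ i)
    rw [this]

lemma dependsOn_invariant {f : (J → Bool) → ℝ} {U : Finset J} {j : J}
    (h : DependsOn f U) (hj : j ∉ U) (x : J → Bool) : f (hflip j x) = f x :=
  h _ _ (fun i hi => hflip_apply_ne j i x (by rintro rfl; exact hj hi))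

lemma dependsOn_of_invariant {f : (J → Bool) → ℝ} {U : Finset J} {j : J}
    (h : DependsOn f (insert j U)) (hinv : ∀ x, f (hflip j x) = f x) : DependsOn f U := by
  intro x y hxy
  by_cases hxyj : x j = y j
  · apply h
    intro i hi
    rcases Finset.mem_insert.mp hi with rfl | hiU
    · exact hxyj
    · exact hxy i hiU
  · have h1 : f x = f (hflip j y) := by
      apply h
      intro i hi
      rcases Finset.mem_insert.mp hi with rfl | hiU
      · rw [hflip_apply_self]
        cases hx : x i <;> cases hy : y i <;> simp_all
      · rw [hflip_apply_ne j i y (fun hij => hxyj (hij ▸ hxy i hiU))]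
        exact hxy i hiU
    rw [h1, hinv y]

lemma fcoef_not_subset {f : (J → Bool) → ℝ} {U : Finset J} (h : DependsOn f U)
    {S : Finset J} (hS : ¬ S ⊆ U) : fcoef f S = 0 := by
  obtain ⟨j, hjS, hjU⟩ : ∃ j, j ∈ S ∧ j ∉ U := by
    by_contra hc
    push_neg at hc
    exact hS hc
  exact fcoef_invariant_eq_zero (dependsOn_invariant h hjU) hjS

noncomputable def hcT (ρ : ℝ) (f : (J → Bool) → ℝ) : (J → Bool) → ℝ :=
  fun x => ∑ S : Finset J, ρ ^ S.card * fcoef f S * walsh S x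

lemma fcoef_hcT (ρ : ℝ) (f : (J → Bool) → ℝ) (S : Finset J) :
    fcoef (hcT ρ f) S = ρ ^ S.card * fcoef f S := by
  unfold hcT
  have h1 : ∀ T : Finset J, (fun x => ρ ^ T.card * fcoef f T * walsh T x)
      = fun x => (ρ ^ T.card * fcoef f T) * walsh T x := fun T => rfl
  rw [fcoef_sum]
  rw [Finset.sum_congr rfl (fun T _ => by rw [h1 T, fcoef_smul_walsh])]
  rw [Finset.sum_ite_eq' Finset.univ S (fun T => ρ ^ T.card * fcoef f T)]
  simp

lemma hcT_dependsOn {ρ : ℝ} {f : (J → Bool) → ℝ} {U : Finset J} (h : DependsOn f U) :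
    DependsOn (hcT ρ f) U := by
  intro x y hxy
  unfold hcT
  apply Finset.sum_congr rfl
  intro S _
  by_cases hS : S ⊆ U
  · rw [walsh_congr S (fun i hi => hxy i (hS hi))]
  · rw [fcoef_not_subset h hS, mul_zero, zero_mul, zero_mul]

lemma hcT_add (ρ : ℝ) (f g : (J → Bool) → ℝ) :
    hcT ρ (fun x => f x + g x) = fun x => hcT ρ f x + hcT ρ g x := by
  funext x
  unfold hcT
  rw [← Finset.sum_add_distrib]
  apply Finset.sum_congr rfl
  intro S _
  rw [fcoef_add]
  ring

lemma hcT_const (ρ : ℝ) (c : ℝ) : hcT ρ (fun _ : J → Bool => c) = fun _ => c := by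
  funext x
  unfold hcT
  rw [Finset.sum_eq_single (∅ : Finset J)]
  · rw [fcoef_const, if_pos rfl, walsh_empty]
    simp
  · intro T _ hT
    rw [fcoef_const, if_neg hT]
    ring
  · intro h
    exact absurd (Finset.mem_univ _) h

lemma symmDiff_singleton_eq_insert {T : Finset J} {j : J} (hj : j ∉ T) :
    symmDiff T {j} = insert j T := by
  ext a
  simp only [Finset.mem_symmDiff, Finset.mem_singleton, Finset.mem_insert]
  constructor
  · rintro (⟨h1, h2⟩ | ⟨rfl, h2⟩) <;> tauto
  · rintro (rfl | h)
    · exact Or.inr ⟨rfl, hj⟩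
    · exact Or.inl ⟨h, fun hh => hj (hh ▸ h)⟩

lemma fcoef_chi_mul (h : (J → Bool) → ℝ) (j : J) (S : Finset J) :
    fcoef (fun x => walsh {j} x * h x) S = fcoef h (symmDiff S {j}) := by
  unfold fcoef
  congr 1
  funext x
  show walsh {j} x * h x * walsh S x = h x * walsh (symmDiff S {j}) x
  rw [← walsh_mul S {j} x]
  ring

lemma hcT_chi_mul {h : (J → Bool) → ℝ} {U : Finset J} {j : J}
    (hd : DependsOn h U) (hj : j ∉ U) (ρ : ℝ) :
    hcT ρ (fun x => walsh {j} x * h x) = fun x => ρ * (walsh {j} x * hcT ρ h x) := by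
  funext x
  unfold hcT
  rw [Finset.mul_sum]
  have hbij : Function.Bijective (fun S : Finset J => symmDiff S {j}) :=
    Function.Involutive.bijective (fun S => symmDiff_symmDiff_cancel_right {j} S)
  rw [← Function.Bijective.sum_comp hbij
    (fun S => ρ ^ S.card * fcoef (fun x => walsh {j} x * h x) S * walsh S x)]
  rw [Finset.mul_sum]
  apply Finset.sum_congr rfl
  intro T _
  rw [fcoef_chi_mul, symmDiff_symmDiff_cancel_right {j} T]
  by_cases hjT : j ∈ T
  · rw [fcoef_invariant_eq_zero (dependsOn_invariant hd hj) hjT]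
    ring
  · rw [symmDiff_singleton_eq_insert hjT, Finset.card_insert_of_notMem hjT,
      show walsh (insert j T) x = walsh T x * walsh {j} x from by
        rw [walsh_mul, symmDiff_singleton_eq_insert hjT],
      pow_succ]
    ring

lemma hcExp_chi_mul_eq_zero {w : (J → Bool) → ℝ} {U : Finset J} {j : J}
    (hd : DependsOn w U) (hj : j ∉ U) :
    hcExp (fun x => walsh {j} x * w x) = 0 := by
  unfold hcExp
  rw [Finset.sum_ninvolution (hflip j)]
  · simp
  · intro x
    rw [walsh_hflip j {j} x, if_pos (Finset.mem_singleton_self j),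
      dependsOn_invariant hd hj x]
    ring
  · intro x hx h
    have := congrFun h j
    rw [hflip_apply_self] at this
    cases hxj : x j <;> simp [hxj] at this
  · intro x; exact Finset.mem_univ _
  · intro x; exact hflip_hflip j x

lemma hcExp_mul_sq_le (a b : (J → Bool) → ℝ) :
    hcExp (fun x => a x * b x) ^ 2 ≤ hcExp (fun x => a x ^ 2) * hcExp (fun x => b x ^ 2) := by
  unfold hcExp
  rw [div_pow, div_mul_div_comm]
  have hden : ((2:ℝ) ^ Fintype.card J) ^ 2 = (2:ℝ) ^ Fintype.card J * 2 ^ Fintype.card J := by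
    ring
  rw [hden]
  apply div_le_div_of_nonneg_right _ (by positivity)
  exact Finset.sum_mul_sq_le_sq_mul_sq Finset.univ a b


lemma quad_bound {P Q C p q r2 : ℝ} (hPp : P ≤ p^2) (hQq : Q ≤ q^2) (hCsq : C^2 ≤ P*Q)
    (hC0 : 0 ≤ C) (hp0 : 0 ≤ p) (hq0 : 0 ≤ q) (hQ0 : 0 ≤ Q) (hP0 : 0 ≤ P)
    (hρ0 : 0 ≤ r2) (hρ : r2 ≤ 1/3) : P + 6*r2*C + r2^2*Q ≤ (p+q)^2 := by
  have hPQ : P * Q ≤ p^2 * q^2 := by nlinarith [hPp, hQq, hQ0, sq_nonneg p]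
  have hC2 : C^2 ≤ (p*q)^2 := by nlinarith [hCsq, hPQ]
  have hCpq : C ≤ p*q := by nlinarith [hC2, hC0, mul_nonneg hp0 hq0]
  have h6 : 6*r2*C ≤ 2*(p*q) := by nlinarith [mul_le_mul_of_nonneg_left hCpq hρ0, hρ, hC0, mul_nonneg hp0 hq0]
  have hr4 : r2^2 ≤ 1/9 := by nlinarith [hρ, hρ0]
  have h9 : r2^2*Q ≤ q^2 := by
    nlinarith [mul_le_mul_of_nonneg_left hQq (sq_nonneg r2),
      mul_le_mul_of_nonneg_right hr4 (sq_nonneg q), sq_nonneg q]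
  nlinarith [hPp, h6, h9]

lemma bonami (ρ : ℝ) (hρ : ρ ^ 2 ≤ 1/3) (U : Finset J) :
    ∀ f : (J → Bool) → ℝ, DependsOn f U →
      hcExp (fun x => hcT ρ f x ^ 4) ≤ (hcExp (fun x => f x ^ 2)) ^ 2 := by
  induction U using Finset.induction_on with
  | empty =>
    intro f hf
    have hconst : f = fun _ => f (fun _ => false) :=
      funext fun x => hf x _ (by intro i hi; exact absurd hi (Finset.notMem_empty i))
    have hTc : hcT ρ f = fun _ : J → Bool => f (fun _ => false) := by
      conv_lhs => rw [hconst]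
      exact hcT_const ρ _
    have h4 : hcExp (fun x => hcT ρ f x ^ 4) = f (fun _ => false) ^ 4 := by
      rw [show (fun x => hcT ρ f x ^ 4) = fun _ : J → Bool => f (fun _ => false) ^ 4 from by
        funext x; rw [hTc]]
      exact hcExp_const _
    have h2 : hcExp (fun x => f x ^ 2) = f (fun _ => false) ^ 2 := by
      rw [show (fun x => f x ^ 2) = fun _ : J → Bool => f (fun _ => false) ^ 2 from by
        funext x; conv_lhs => rw [hconst]]
      exact hcExp_const _
    rw [h4, h2]
    exact le_of_eq (by ring)
  | @insert j U hj ih =>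
    intro f hf
    set d : (J → Bool) → ℝ := fun x => (f x + f (hflip j x)) / 2 with hd_def
    set e : (J → Bool) → ℝ := fun x => walsh {j} x * ((f x - f (hflip j x)) / 2) with he_def
    have hflip_agree : ∀ x y : J → Bool, (∀ i ∈ insert j U, x i = y i) →
        ∀ i ∈ insert j U, hflip j x i = hflip j y i := by
      intro x y hxy i hi
      by_cases hij : i = j
      · subst hij
        rw [hflip_apply_self, hflip_apply_self, hxy i hi]
      · rw [hflip_apply_ne _ _ _ hij, hflip_apply_ne _ _ _ hij]
        exact hxy i hi
    have hdins : DependsOn d (insert j U) := by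
      intro x y hxy
      simp only [hd_def]
      rw [hf x y hxy, hf _ _ (hflip_agree x y hxy)]
    have heins : DependsOn e (insert j U) := by
      intro x y hxy
      simp only [he_def]
      rw [hf x y hxy, hf _ _ (hflip_agree x y hxy),
        walsh_congr {j} (fun i hi => hxy i (by
          rw [Finset.mem_singleton.mp hi]; exact Finset.mem_insert_self j U))]
    have hdinv : ∀ x, d (hflip j x) = d x := by
      intro x
      simp only [hd_def]
      rw [hflip_hflip]
      ring
    have heinv : ∀ x, e (hflip j x) = e x := by
      intro x
      simp only [he_def]
      rw [hflip_hflip, walsh_hflip, if_pos (Finset.mem_singleton_self j)]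
      ring
    have hdU : DependsOn d U := dependsOn_of_invariant hdins hdinv
    have heU : DependsOn e U := dependsOn_of_invariant heins heinv
    have hfde : f = fun x => d x + walsh {j} x * e x := by
      funext x
      simp only [hd_def, he_def]
      have hw := walsh_sq ({j} : Finset J) x
      linear_combination ((f (hflip j x) - f x) / 2) * hw
    have hTf : hcT ρ f = fun x => hcT ρ d x + ρ * (walsh {j} x * hcT ρ e x) := by
      conv_lhs => rw [hfde]
      rw [hcT_add, hcT_chi_mul heU hj]
    have hudep : DependsOn (hcT ρ d) U := hcT_dependsOn hdU
    have hvdep : DependsOn (hcT ρ e) U := hcT_dependsOn heU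
    -- expectation of 4th power
    set u : (J → Bool) → ℝ := hcT ρ d with hu_def
    set v : (J → Bool) → ℝ := hcT ρ e with hv_def
    have hexp4 : hcExp (fun x => hcT ρ f x ^ 4)
        = hcExp (fun x => u x ^ 4) + 6 * ρ ^ 2 * hcExp (fun x => u x ^ 2 * v x ^ 2)
          + ρ ^ 4 * hcExp (fun x => v x ^ 4) := by
      rw [hTf]
      have hpt : (fun x => (u x + ρ * (walsh {j} x * v x)) ^ 4)
          = fun x => (u x ^ 4 + 6 * ρ ^ 2 * (u x ^ 2 * v x ^ 2) + ρ ^ 4 * v x ^ 4)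
            + walsh {j} x * (4 * ρ * u x ^ 3 * v x + 4 * ρ ^ 3 * u x * v x ^ 3 * (walsh {j} x * walsh {j} x)) := by
        funext x
        have hw := walsh_sq ({j} : Finset J) x
        linear_combination (6 * ρ ^ 2 * u x ^ 2 * v x ^ 2
          + ρ ^ 4 * v x ^ 4 * (walsh {j} x * walsh {j} x + 1)) * hw
      rw [hpt, hcExp_add]
      have hodd : hcExp (fun x => walsh {j} x *
          (4 * ρ * u x ^ 3 * v x + 4 * ρ ^ 3 * u x * v x ^ 3 * (walsh {j} x * walsh {j} x))) = 0 := by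
        have hw4 : (fun x => walsh {j} x *
            (4 * ρ * u x ^ 3 * v x + 4 * ρ ^ 3 * u x * v x ^ 3 * (walsh {j} x * walsh {j} x)))
            = fun x => walsh {j} x * (4 * ρ * u x ^ 3 * v x + 4 * ρ ^ 3 * u x * v x ^ 3) := by
          funext x
          rw [walsh_sq]
          ring
        rw [hw4]
        refine hcExp_chi_mul_eq_zero (U := U) ?_ hj
        intro x y hxy
        simp only [hudep x y hxy, hvdep x y hxy]
      rw [hodd, add_zero]
      have hsplit : (fun x => u x ^ 4 + 6 * ρ ^ 2 * (u x ^ 2 * v x ^ 2) + ρ ^ 4 * v x ^ 4)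
          = fun x => (fun y => u y ^ 4) x + ((fun y => 6 * ρ ^ 2 * (u y ^ 2 * v y ^ 2)) x
            + (fun y => ρ ^ 4 * v y ^ 4) x) := by
        funext x; ring
      rw [hsplit, hcExp_add, hcExp_add, hcExp_smul, hcExp_smul]
      ring
    -- expectation of square
    have hexp2 : hcExp (fun x => f x ^ 2)
        = hcExp (fun x => d x ^ 2) + hcExp (fun x => e x ^ 2) := by
      conv_lhs => rw [hfde]
      have hpt : (fun x => (d x + walsh {j} x * e x) ^ 2)
          = fun x => (d x ^ 2 + e x ^ 2 * (walsh {j} x * walsh {j} x))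
            + walsh {j} x * (2 * d x * e x) := by
        funext x; ring
      rw [hpt]
      have hpt2 : (fun x => (d x ^ 2 + e x ^ 2 * (walsh {j} x * walsh {j} x))
            + walsh {j} x * (2 * d x * e x))
          = fun x => ((fun y => d y ^ 2) x + (fun y => e y ^ 2) x)
            + (fun y => walsh {j} y * ((fun z => 2 * d z * e z) y)) x := by
        funext x
        rw [walsh_sq]
        ring
      rw [hpt2, hcExp_add, hcExp_add]
      have hodd : hcExp (fun y => walsh {j} y * (2 * d y * e y)) = 0 := by
        refine hcExp_chi_mul_eq_zero (U := U) ?_ hj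
        intro x y hxy
        simp only [hdU x y hxy, heU x y hxy]
      rw [hodd, add_zero]
    -- conclude
    have hP := ih d hdU
    have hQ := ih e heU
    rw [hexp4, hexp2]
    set P := hcExp (fun x => u x ^ 4) with hP_def
    set Q := hcExp (fun x => v x ^ 4) with hQ_def
    set C := hcExp (fun x => u x ^ 2 * v x ^ 2) with hC_def
    set p := hcExp (fun x => d x ^ 2) with hp_def
    set q := hcExp (fun x => e x ^ 2) with hq_def
    have hPp : P ≤ p ^ 2 := hP
    have hQq : Q ≤ q ^ 2 := hQ
    have hp0 : 0 ≤ p := hcExp_nonneg (fun x => sq_nonneg _)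
    have hq0 : 0 ≤ q := hcExp_nonneg (fun x => sq_nonneg _)
    have hP0 : 0 ≤ P := hcExp_nonneg (fun x => by positivity)
    have hQ0 : 0 ≤ Q := hcExp_nonneg (fun x => by positivity)
    have hC0 : 0 ≤ C := hcExp_nonneg (fun x => by positivity)
    have hCsq : C ^ 2 ≤ P * Q := by
      have h := hcExp_mul_sq_le (fun x => u x ^ 2) (fun x => v x ^ 2)
      have h1 : (fun x => (fun y => u y ^ 2) x ^ 2) = fun x => u x ^ 4 := by
        funext x; ring
      have h2 : (fun x => (fun y => v y ^ 2) x ^ 2) = fun x => v x ^ 4 := by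
        funext x; ring
      rw [h1, h2] at h
      exact h
    have main := quad_bound hPp hQq hCsq hC0 hp0 hq0 hQ0 hP0 (sq_nonneg ρ) hρ
    calc P + 6 * ρ ^ 2 * C + ρ ^ 4 * Q = P + 6 * ρ ^ 2 * C + (ρ ^ 2) ^ 2 * Q := by ring
      _ ≤ (p + q) ^ 2 := main


lemma lqNorm_two_sq (g : (J → Bool) → ℝ) :
    lqNorm 2 g ^ 2 = hcExp (fun x => g x ^ 2) := by
  unfold lqNorm
  have h1 : (fun x => |g x| ^ (2:ℝ)) = fun x => g x ^ 2 := by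
    funext x
    rw [show ((2:ℝ)) = ((2:ℕ):ℝ) from by norm_num, Real.rpow_natCast, sq_abs]
  rw [h1]
  have h0 : 0 ≤ hcExp (fun x => g x ^ 2) := hcExp_nonneg fun x => sq_nonneg _
  rw [← Real.rpow_natCast (hcExp (fun x => g x ^ 2) ^ ((1:ℝ)/2)) 2, ← Real.rpow_mul h0]
  norm_num

lemma lqNorm_one (g : (J → Bool) → ℝ) : lqNorm 1 g = hcExp (fun x => |g x|) := by
  unfold lqNorm
  simp [Real.rpow_one]

lemma lqNorm_two_nonneg (g : (J → Bool) → ℝ) : 0 ≤ lqNorm 2 g :=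
  Real.rpow_nonneg (hcExp_nonneg fun x => Real.rpow_nonneg (abs_nonneg _) _) _

lemma lqNorm_one_le_two (g : (J → Bool) → ℝ) : lqNorm 1 g ≤ lqNorm 2 g := by
  have h2 : 0 ≤ lqNorm 2 g := lqNorm_two_nonneg g
  have h1 : 0 ≤ hcExp (fun x => |g x|) := hcExp_nonneg fun x => abs_nonneg _
  rw [lqNorm_one]
  have key : hcExp (fun x => |g x|) ^ 2 ≤ lqNorm 2 g ^ 2 := by
    rw [lqNorm_two_sq]
    have h := hcExp_mul_sq_le (fun x => |g x|) (fun _ => 1)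
    have e1 : (fun x => (fun y : J → Bool => |g y|) x * (fun _ : J → Bool => (1:ℝ)) x)
        = fun x => |g x| := by funext x; simp
    have e2 : (fun x => (fun y : J → Bool => |g y|) x ^ 2) = fun x => g x ^ 2 := by
      funext x; rw [sq_abs]
    have e3 : (fun x => (fun _ : J → Bool => (1:ℝ)) x ^ 2) = fun _ : J → Bool => (1:ℝ) := by
      funext x; norm_num
    rw [e1, e2, e3, hcExp_const] at h
    simpa using h
  nlinarith [key, h1, h2]

lemma lqNorm_one_pos {g : (J → Bool) → ℝ} (hg : g ≠ 0) : 0 < lqNorm 1 g := by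
  rw [lqNorm_one]
  have hx0 : ∃ x, g x ≠ 0 := by
    by_contra h
    push_neg at h
    exact hg (funext h)
  obtain ⟨x0, hx0⟩ := hx0
  unfold hcExp
  apply div_pos _ two_pow_card_pos
  exact Finset.sum_pos' (fun x _ => abs_nonneg _) ⟨x0, Finset.mem_univ _, abs_pos.mpr hx0⟩

lemma chain_bound {X Y Z W N1 N2 : ℝ} (hX0 : 0 ≤ X) (hXY : X ≤ Y)
    (hY2 : Y ^ 2 ≤ N1 * Z) (hZ0 : 0 ≤ Z) (hZ2 : Z ^ 2 ≤ N2 ^ 2 * W) (hW : W ≤ X ^ 2)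
    (hN1 : 0 ≤ N1) (hN2 : 0 ≤ N2) : X ≤ N1 * N2 := by
  rcases eq_or_lt_of_le hX0 with h0 | hX
  · rw [← h0]; exact mul_nonneg hN1 hN2
  have h1 : X ^ 2 ≤ Y ^ 2 := by nlinarith
  have h2 : (X ^ 2) ^ 2 ≤ (Y ^ 2) ^ 2 := by nlinarith [sq_nonneg X]
  have h3 : (Y ^ 2) ^ 2 ≤ (N1 * Z) ^ 2 := by nlinarith [hY2, sq_nonneg Y]
  have h4 : (N1 * Z) ^ 2 ≤ N1 ^ 2 * (N2 ^ 2 * W) := by nlinarith [hZ2, sq_nonneg N1]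
  have h5 : N1 ^ 2 * (N2 ^ 2 * W) ≤ N1 ^ 2 * N2 ^ 2 * X ^ 2 := by
    nlinarith [hW, sq_nonneg N1, sq_nonneg N2, mul_nonneg (sq_nonneg N1) (sq_nonneg N2)]
  have h6 : (X ^ 2) ^ 2 ≤ N1 ^ 2 * N2 ^ 2 * X ^ 2 := by linarith
  have hX2 : 0 < X ^ 2 := by positivity
  have h7 : X ^ 2 ≤ (N1 * N2) ^ 2 := by nlinarith [h6, hX2]
  nlinarith [h7, hX, mul_nonneg hN1 hN2]

/-- The hypercontractive bound: `∑_S 3^{-|S|} ĝ(S)² ≤ ‖g‖₁ ‖g‖₂`. -/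
lemma X_le_N1N2 (g : (J → Bool) → ℝ) :
    ∑ S : Finset J, (3:ℝ)⁻¹ ^ S.card * fcoef g S ^ 2 ≤ lqNorm 1 g * lqNorm 2 g := by
  set ρ : ℝ := Real.sqrt 3⁻¹ with hρ_def
  have hρ2 : ρ ^ 2 = 3⁻¹ := Real.sq_sqrt (by norm_num)
  set u : (J → Bool) → ℝ := hcT ρ (hcT ρ g) with hu_def
  set X : ℝ := ∑ S : Finset J, (3:ℝ)⁻¹ ^ S.card * fcoef g S ^ 2 with hX_def
  have hterm : ∀ S : Finset J, (3:ℝ)⁻¹ ^ S.card * fcoef g S ^ 2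
      = fcoef g S * (ρ ^ S.card * (ρ ^ S.card * fcoef g S)) := by
    intro S
    have : (3:ℝ)⁻¹ ^ S.card = ρ ^ S.card * ρ ^ S.card := by
      rw [← hρ2, ← pow_mul, two_mul, pow_add]
    rw [this]; ring
  have hXE : X = hcExp (fun x => g x * u x) := by
    rw [hcExp_mul_eq g u]
    rw [hX_def]
    apply Finset.sum_congr rfl
    intro S _
    rw [hu_def, fcoef_hcT, fcoef_hcT, hterm S]
  have hX2 : hcExp (fun x => hcT ρ g x ^ 2) = X := by
    have h1 : (fun x => hcT ρ g x ^ 2) = fun x => hcT ρ g x * hcT ρ g x := by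
      funext x; ring
    rw [h1, hcExp_mul_eq]
    rw [hX_def]
    apply Finset.sum_congr rfl
    intro S _
    rw [fcoef_hcT, hterm S]
    ring
  have hX0 : 0 ≤ X := by
    rw [hX_def]
    apply Finset.sum_nonneg
    intro S _
    positivity
  have hW : hcExp (fun x => u x ^ 4) ≤ X ^ 2 := by
    have hb := bonami ρ (le_of_eq (by rw [hρ2]; norm_num)) Finset.univ (hcT ρ g)
      (dependsOn_univ _)
    rw [hX2] at hb
    exact hb
  -- Cauchy-Schwarz chain
  set Y : ℝ := hcExp (fun x => |g x| * |u x|) with hY_def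
  set Z : ℝ := hcExp (fun x => |g x| * u x ^ 2) with hZ_def
  have hXY : X ≤ Y := by
    rw [hXE, hY_def]
    apply hcExp_mono
    intro x
    calc g x * u x ≤ |g x * u x| := le_abs_self _
      _ = |g x| * |u x| := abs_mul _ _
  have hY2 : Y ^ 2 ≤ hcExp (fun x => |g x|) * Z := by
    have h := hcExp_mul_sq_le (fun x => Real.sqrt |g x|) (fun x => Real.sqrt |g x| * |u x|)
    have e1 : (fun x => (fun y => Real.sqrt |g y|) x * ((fun y => Real.sqrt |g y| * |u y|) x))
        = fun x => |g x| * |u x| := by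
      funext x
      rw [show Real.sqrt |g x| * (Real.sqrt |g x| * |u x|)
          = (Real.sqrt |g x| * Real.sqrt |g x|) * |u x| from by ring,
        Real.mul_self_sqrt (abs_nonneg _)]
    have e2 : (fun x => (fun y => Real.sqrt |g y|) x ^ 2) = fun x => |g x| := by
      funext x
      rw [Real.sq_sqrt (abs_nonneg _)]
    have e3 : (fun x => ((fun y => Real.sqrt |g y| * |u y|) x) ^ 2)
        = fun x => |g x| * u x ^ 2 := by
      funext x
      rw [mul_pow, Real.sq_sqrt (abs_nonneg _), sq_abs]
    rw [e1, e2, e3] at h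
    exact h
  have hZ2 : Z ^ 2 ≤ lqNorm 2 g ^ 2 * hcExp (fun x => u x ^ 4) := by
    have h := hcExp_mul_sq_le (fun x => |g x|) (fun x => u x ^ 2)
    have e2 : (fun x => (fun y => |g y|) x ^ 2) = fun x => g x ^ 2 := by
      funext x; rw [sq_abs]
    have e3 : (fun x => ((fun y => u y ^ 2) x) ^ 2) = fun x => u x ^ 4 := by
      funext x; ring
    rw [e2, e3] at h
    rw [lqNorm_two_sq]
    exact h
  have hZ0 : 0 ≤ Z := hcExp_nonneg fun x => by positivity
  have hY2' : Y ^ 2 ≤ lqNorm 1 g * Z := by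
    rw [lqNorm_one]
    exact hY2
  exact chain_bound hX0 hXY hY2' hZ0 hZ2 hW
    (by rw [lqNorm_one]; exact hcExp_nonneg fun x => abs_nonneg _) (lqNorm_two_nonneg g)


lemma A_le_M (g : (J → Bool) → ℝ) (h0 : fcoef g ∅ = 0) :
    ∑ S : Finset J, fcoef g S ^ 2 / (S.card : ℝ) ≤ ∑ S : Finset J, fcoef g S ^ 2 := by
  apply Finset.sum_le_sum
  intro S _
  by_cases hS : S = ∅
  · subst hS; rw [h0]; simp
  · have h1 : (1:ℝ) ≤ (S.card : ℝ) := by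
      exact_mod_cast Finset.card_pos.mpr (Finset.nonempty_iff_ne_empty.mpr hS)
    exact div_le_self (sq_nonneg _) h1

lemma inv_k_bound (K k : ℕ) (hK : 1 ≤ K) (hk : 1 ≤ k) :
    (1:ℝ) / k ≤ (3:ℝ) ^ K / K * (3:ℝ)⁻¹ ^ k + 1 / (K + 1) := by
  have hk0 : (0:ℝ) < (k:ℝ) := by exact_mod_cast hk
  have hK0 : (0:ℝ) < (K:ℝ) := by exact_mod_cast hK
  rcases le_or_gt k K with h | h
  · have hnat : K * 3 ^ k ≤ k * 3 ^ K := by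
      obtain ⟨m, hm⟩ : ∃ m, K = k + m := ⟨K - k, by omega⟩
      subst hm
      have h3 : m + 1 ≤ 3 ^ m :=
        Nat.succ_le_of_lt (lt_of_lt_of_le (Nat.lt_two_pow_self (n := m)) (Nat.pow_le_pow_left (by norm_num) m))
      have h4 : k + m ≤ k * (m + 1) := by
        have hm' : m ≤ k * m := Nat.le_mul_of_pos_left m (by omega)
        rw [Nat.mul_add, Nat.mul_one]
        omega
      calc (k + m) * 3 ^ k ≤ (k * (m + 1)) * 3 ^ k := Nat.mul_le_mul_right _ h4
        _ ≤ (k * 3 ^ m) * 3 ^ k := Nat.mul_le_mul_right _ (Nat.mul_le_mul_left _ h3)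
        _ = k * 3 ^ (k + m) := by rw [mul_assoc, ← pow_add, add_comm m k]
    have hcast : (K:ℝ) * 3 ^ k ≤ (k:ℝ) * 3 ^ K := by exact_mod_cast hnat
    have h3kpos : (0:ℝ) < 3 ^ k := by positivity
    have hmain : (1:ℝ) / k ≤ (3:ℝ) ^ K / K * (3:ℝ)⁻¹ ^ k := by
      rw [inv_pow, div_mul_eq_mul_div, div_le_div_iff₀ hk0 hK0, one_mul]
      calc (K:ℝ) = (K * 3 ^ k) / 3 ^ k := by field_simp
        _ ≤ ((k:ℝ) * 3 ^ K) / 3 ^ k := div_le_div_of_nonneg_right hcast h3kpos.le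
        _ = 3 ^ K * ((3:ℝ) ^ k)⁻¹ * k := by field_simp
    have : (0:ℝ) ≤ 1 / (K + 1) := by positivity
    linarith
  · have hKk : ((K:ℝ) + 1) ≤ (k:ℝ) := by exact_mod_cast h
    have : (1:ℝ) / k ≤ 1 / (K + 1) :=
      one_div_le_one_div_of_le (by positivity) hKk
    have h2 : (0:ℝ) ≤ (3:ℝ) ^ K / K * (3:ℝ)⁻¹ ^ k := by positivity
    linarith

lemma A_le_KX (g : (J → Bool) → ℝ) (K : ℕ) (hK : 1 ≤ K) :
    ∑ S : Finset J, fcoef g S ^ 2 / (S.card : ℝ)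
      ≤ (3:ℝ) ^ K / K * (∑ S : Finset J, (3:ℝ)⁻¹ ^ S.card * fcoef g S ^ 2)
        + (1 / (K + 1)) * ∑ S : Finset J, fcoef g S ^ 2 := by
  rw [Finset.mul_sum, Finset.mul_sum, ← Finset.sum_add_distrib]
  apply Finset.sum_le_sum
  intro S _
  by_cases hS : S = ∅
  · subst hS
    simp only [Finset.card_empty, Nat.cast_zero, div_zero]
    positivity
  · have hk : 1 ≤ S.card := Finset.card_pos.mpr (Finset.nonempty_iff_ne_empty.mpr hS)
    have hb := inv_k_bound K S.card hK hk
    calc fcoef g S ^ 2 / (S.card : ℝ) = (1 / (S.card:ℝ)) * fcoef g S ^ 2 := by ring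
      _ ≤ ((3:ℝ) ^ K / K * (3:ℝ)⁻¹ ^ S.card + 1 / (K + 1)) * fcoef g S ^ 2 :=
          mul_le_mul_of_nonneg_right hb (sq_nonneg _)
      _ = (3:ℝ) ^ K / K * ((3:ℝ)⁻¹ ^ S.card * fcoef g S ^ 2)
          + 1 / (K + 1) * fcoef g S ^ 2 := by ring

end Stmt9


namespace Stmt9N

lemma exp_nat_lb (n : ℕ) : (2.7182818:ℝ) ^ n ≤ Real.exp n := by
  have h1 : Real.exp (n:ℝ) = Real.exp 1 ^ n := by
    rw [← Real.exp_nat_mul]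
    norm_num
  rw [h1]
  exact pow_le_pow_left₀ (by norm_num) (le_of_lt (lt_trans (by norm_num) Real.exp_one_gt_d9)) n

lemma exp2_lb : (7.38:ℝ) ≤ Real.exp 2 := by
  have h := exp_nat_lb 2
  norm_num at h
  linarith

lemma exp3_lb : (20:ℝ) ≤ Real.exp 3 := by
  have h := exp_nat_lb 3
  norm_num at h
  linarith

lemma exp4_lb : (54:ℝ) ≤ Real.exp 4 := by
  have h := exp_nat_lb 4
  norm_num at h
  linarith

lemma exp6_lb : (403:ℝ) ≤ Real.exp 6 := by
  have h := exp_nat_lb 6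
  norm_num at h
  linarith

lemma exp8_lb : (2980:ℝ) ≤ Real.exp 8 := by
  have h := exp_nat_lb 8
  norm_num at h
  linarith

lemma exp13_lb : (433627:ℝ) ≤ Real.exp 13 := by
  have h := exp_nat_lb 13
  norm_num at h
  linarith

lemma exp_13_6_lb : (8.7:ℝ) ≤ Real.exp (13/6) := by
  apply le_of_pow_le_pow_left₀ (n := 6) (by norm_num) (Real.exp_nonneg _)
  rw [← Real.exp_nat_mul]
  norm_num
  nlinarith [exp13_lb]

lemma exp_neg_ub {c eL : ℝ} (h : eL ≤ Real.exp c) (heL : 0 < eL) :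
    Real.exp (-c) ≤ 1 / eL := by
  rw [Real.exp_neg, one_div]
  exact inv_anti₀ heL h

/-- monotonicity of L * exp(-L) for L ≥ 1 -/
lemma mono_mul_exp_neg {a L : ℝ} (ha : 1 ≤ a) (haL : a ≤ L) :
    L * Real.exp (-L) ≤ a * Real.exp (-a) := by
  have h1 : L ≤ a * Real.exp (L - a) := by
    nlinarith [Real.add_one_le_exp (L - a), ha, haL]
  calc L * Real.exp (-L) ≤ (a * Real.exp (L - a)) * Real.exp (-L) :=
        mul_le_mul_of_nonneg_right h1 (Real.exp_nonneg _)
    _ = a * Real.exp (-a) := by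
        rw [mul_assoc, ← Real.exp_add]
        congr 2
        ring

lemma branch1 {L : ℝ} (hL : 0 < L) (hL2 : L ≤ 13/6) :
    L + 3 * Real.exp (-(6/5) * L) ≤ 3 := by
  have hE := Real.add_one_le_exp ((6/5) * L)
  have hprod : Real.exp (-(6/5) * L) * Real.exp ((6/5) * L) = 1 := by
    rw [← Real.exp_add]
    norm_num
  have ht0 : 0 < Real.exp (-(6/5) * L) := Real.exp_pos _
  have ht1 : Real.exp (-(6/5) * L) * (1 + (6/5) * L) ≤ 1 := by
    calc Real.exp (-(6/5) * L) * (1 + (6/5) * L)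
        ≤ Real.exp (-(6/5) * L) * Real.exp ((6/5) * L) :=
          mul_le_mul_of_nonneg_left (by linarith) ht0.le
      _ = 1 := hprod
  nlinarith [ht1, hL, hL2, ht0, mul_pos hL ht0]


lemma branch2 {L : ℝ} (hL1 : 13/6 ≤ L) (hL2 : L ≤ 7) :
    (9/2 * Real.exp (-L) + 1/3) * L + 3 * Real.exp (-(6/5) * L) ≤ 3 := by
  have hexpand : (9/2 * Real.exp (-L) + 1/3) * L = 9/2 * (L * Real.exp (-L)) + L/3 := by ring
  rw [hexpand]
  rcases le_or_gt L 3 with hc | hc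
  · have hm : L * Real.exp (-L) ≤ 13/6 * Real.exp (-(13/6)) :=
      mono_mul_exp_neg (by norm_num) hL1
    have he : Real.exp (-(13/6)) ≤ 1/8.7 := exp_neg_ub exp_13_6_lb (by norm_num)
    have hLe : L * Real.exp (-L) ≤ 13/6 * (1/8.7) := by nlinarith [hm, he]
    have ht3 : Real.exp (-(6/5) * L) ≤ 1/7.38 := by
      calc Real.exp (-(6/5) * L) ≤ Real.exp (-2) := Real.exp_le_exp.mpr (by nlinarith)
        _ ≤ 1/7.38 := exp_neg_ub exp2_lb (by norm_num)
    linarith [hLe, ht3, hc]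
  rcases le_or_gt L (9/2) with hc2 | hc2
  · have hm : L * Real.exp (-L) ≤ 3 * Real.exp (-3) :=
      mono_mul_exp_neg (by norm_num) hc.le
    have he : Real.exp (-3) ≤ 1/20 := exp_neg_ub exp3_lb (by norm_num)
    have hLe : L * Real.exp (-L) ≤ 3 * (1/20) := by nlinarith [hm, he]
    have ht3 : Real.exp (-(6/5) * L) ≤ 1/20 := by
      calc Real.exp (-(6/5) * L) ≤ Real.exp (-3) := Real.exp_le_exp.mpr (by nlinarith)
        _ ≤ 1/20 := exp_neg_ub exp3_lb (by norm_num)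
    linarith [hLe, ht3, hc2]
  · have hm : L * Real.exp (-L) ≤ 9/2 * Real.exp (-(9/2)) :=
      mono_mul_exp_neg (by norm_num) hc2.le
    have he : Real.exp (-(9/2)) ≤ 1/54 := by
      calc Real.exp (-(9/2)) ≤ Real.exp (-4) := Real.exp_le_exp.mpr (by norm_num)
        _ ≤ 1/54 := exp_neg_ub exp4_lb (by norm_num)
    have hLe : L * Real.exp (-L) ≤ 9/2 * (1/54) := by nlinarith [hm, he]
    have ht3 : Real.exp (-(6/5) * L) ≤ 1/54 := by
      calc Real.exp (-(6/5) * L) ≤ Real.exp (-4) := Real.exp_le_exp.mpr (by nlinarith)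
        _ ≤ 1/54 := exp_neg_ub exp4_lb (by norm_num)
    linarith [hLe, ht3, hL2]

lemma branch3 {L : ℝ} (hL : 7 ≤ L) :
    ∃ K : ℕ, 1 ≤ K ∧
      ((3:ℝ) ^ K / K * Real.exp (-L) + 1 / (K + 1)) * L + 3 * Real.exp (-(6/5) * L) ≤ 3 := by
  have hK4 : 4 ≤ ⌈L/2⌉₊ := by
    have h3 : ((3:ℕ):ℝ) < L/2 := by push_cast; linarith
    have := Nat.lt_ceil.mpr h3
    omega
  refine ⟨⌈L/2⌉₊, by omega, ?_⟩
  set K := ⌈L/2⌉₊ with hK_def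
  set k : ℝ := (K:ℝ) with hk_def
  have hk4 : (4:ℝ) ≤ k := by rw [hk_def]; exact_mod_cast hK4
  have hk0 : (0:ℝ) < k := by linarith
  have hL2k : L ≤ 2 * k := by
    have := Nat.le_ceil (L/2)
    rw [hk_def]
    linarith [this]
  have hkL : 2 * k - 2 ≤ L := by
    have := Nat.ceil_lt_add_one (show (0:ℝ) ≤ L/2 by linarith)
    rw [hk_def]
    linarith [this]
  have hmono : L * Real.exp (-L) ≤ (2 * k) * Real.exp (2 - 2 * k) :=
    mul_le_mul hL2k (Real.exp_le_exp.mpr (by linarith)) (Real.exp_nonneg _) (by linarith)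
  have hr0 : (0:ℝ) ≤ 3 * Real.exp (-2) := by positivity
  have hr1 : 3 * Real.exp (-2) ≤ 1 := by
    rw [Real.exp_neg, ← div_eq_mul_inv, div_le_one (Real.exp_pos 2)]
    linarith [exp2_lb]
  have hpowK : (3 * Real.exp (-2)) ^ K ≤ (3 * Real.exp (-2)) ^ 4 :=
    pow_le_pow_of_le_one hr0 hr1 hK4
  have hexpK : Real.exp (-2) ^ K = Real.exp ((K:ℝ) * (-2)) := (Real.exp_nat_mul _ K).symm
  have hid : (3:ℝ) ^ K * Real.exp (2 - 2 * k) = Real.exp 2 * (3 * Real.exp (-2)) ^ K := by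
    rw [mul_pow, hexpK, show (2 - 2*k : ℝ) = 2 + (K:ℝ) * (-2) by rw [← hk_def]; ring,
      Real.exp_add]
    ring
  have hpow4 : Real.exp 2 * (3 * Real.exp (-2)) ^ 4 = 81 * Real.exp (-6) := by
    have h1 : ((3:ℝ) * Real.exp (-2)) ^ 4 = 81 * Real.exp (-2) ^ 4 := by
      rw [mul_pow]; norm_num
    have h2 : Real.exp (-2) ^ 4 = Real.exp (-8) := by
      rw [← Real.exp_nat_mul]
      norm_num
    rw [h1, h2,
      show Real.exp 2 * (81 * Real.exp (-8)) = 81 * (Real.exp 2 * Real.exp (-8)) from by ring,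
      ← Real.exp_add]
    norm_num
  have he6 : Real.exp (-6) ≤ 1/403 := exp_neg_ub exp6_lb (by norm_num)
  have h4 : (3:ℝ) ^ K * Real.exp (2 - 2 * k) ≤ 81 * Real.exp (-6) := by
    rw [hid]
    calc Real.exp 2 * (3 * Real.exp (-2)) ^ K
        ≤ Real.exp 2 * (3 * Real.exp (-2)) ^ 4 :=
          mul_le_mul_of_nonneg_left hpowK (Real.exp_nonneg _)
      _ = 81 * Real.exp (-6) := hpow4
  have hT1 : (3:ℝ) ^ K / k * Real.exp (-L) * L ≤ 2 * (81 * (1/403)) := by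
    have h1 : (3:ℝ) ^ K / k * Real.exp (-L) * L = ((3:ℝ) ^ K / k) * (L * Real.exp (-L)) := by
      ring
    have h2 : ((3:ℝ) ^ K / k) * (L * Real.exp (-L))
        ≤ ((3:ℝ) ^ K / k) * ((2 * k) * Real.exp (2 - 2 * k)) :=
      mul_le_mul_of_nonneg_left hmono (by positivity)
    have h3 : ((3:ℝ) ^ K / k) * ((2 * k) * Real.exp (2 - 2 * k))
        = 2 * ((3:ℝ) ^ K * Real.exp (2 - 2 * k)) := by
      field_simp
    rw [h1]
    nlinarith [h2, h3, h4, he6]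
  have hT2 : L / (k + 1) ≤ 2 := by
    rw [div_le_iff₀ (by linarith)]
    linarith
  have hT3 : Real.exp (-(6/5) * L) ≤ 1/2980 := by
    calc Real.exp (-(6/5) * L) ≤ Real.exp (-8) := Real.exp_le_exp.mpr (by nlinarith)
      _ ≤ 1/2980 := exp_neg_ub exp8_lb (by norm_num)
  have hexpand : ((3:ℝ) ^ K / k * Real.exp (-L) + 1 / (k + 1)) * L
      = (3:ℝ) ^ K / k * Real.exp (-L) * L + L / (k + 1) := by ring
  rw [hexpand]
  linarith [hT1, hT2, hT3]

end Stmt9N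


namespace Stmt9

variable {J : Type*} [Fintype J] [DecidableEq J]

lemma assemble {A X M e L c1 c2 τ : ℝ} (hA : A ≤ c1 * X + c2 * M) (hX : X ≤ e * M)
    (hM : 0 ≤ M) (hc1 : 0 ≤ c1) (hL : 0 ≤ L)
    (hb : (c1 * e + c2) * L + 3 * τ ≤ 3) :
    A * L ≤ 3 * (M * (1 - τ)) := by
  have h1 : A ≤ (c1 * e + c2) * M := by nlinarith [mul_le_mul_of_nonneg_left hX hc1]
  have h2 : A * L ≤ ((c1 * e + c2) * M) * L := mul_le_mul_of_nonneg_right h1 hL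
  have h3 : (c1 * e + c2) * L ≤ 3 - 3 * τ := by linarith
  have h4 : ((c1 * e + c2) * L) * M ≤ (3 - 3 * τ) * M := mul_le_mul_of_nonneg_right h3 hM
  nlinarith [h2, h4]

open scoped Classical in
lemma perj (g : (J → Bool) → ℝ) (h0 : fcoef g ∅ = 0) :
    ∑ S : Finset J, fcoef g S ^ 2 / (S.card : ℝ) ≤
      3 * (if g = 0 then 0
        else if lqNorm 1 g = lqNorm 2 g then (6 / 5) * lqNorm 2 g ^ 2
        else lqNorm 2 g ^ 2 * (1 - (lqNorm 1 g / lqNorm 2 g) ^ ((6:ℝ)/5)) /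
          Real.log (lqNorm 2 g / lqNorm 1 g)) := by
  by_cases hg : g = 0
  · rw [if_pos hg]
    have hz : ∀ S : Finset J, fcoef g S = 0 := by
      intro S
      rw [hg]
      unfold fcoef
      have h : (fun x => (0 : (J → Bool) → ℝ) x * walsh S x) = fun _ : J → Bool => (0:ℝ) := by
        funext x; simp
      rw [h, hcExp_const]
    rw [Finset.sum_eq_zero (fun S _ => by rw [hz S]; norm_num)]
    norm_num
  rw [if_neg hg]
  have hN1 : 0 < lqNorm 1 g := lqNorm_one_pos hg
  have h12 : lqNorm 1 g ≤ lqNorm 2 g := lqNorm_one_le_two g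
  have hN2 : 0 < lqNorm 2 g := lt_of_lt_of_le hN1 h12
  have hMN : (∑ S : Finset J, fcoef g S ^ 2) = lqNorm 2 g ^ 2 := by
    rw [lqNorm_two_sq, hcExp_sq_eq]
  have hAM : ∑ S : Finset J, fcoef g S ^ 2 / (S.card : ℝ) ≤ lqNorm 2 g ^ 2 := by
    rw [← hMN]; exact A_le_M g h0
  by_cases heq : lqNorm 1 g = lqNorm 2 g
  · rw [if_pos heq]
    nlinarith [hAM, sq_nonneg (lqNorm 2 g)]
  rw [if_neg heq]
  have hlt : lqNorm 1 g < lqNorm 2 g := lt_of_le_of_ne h12 heq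
  set L := Real.log (lqNorm 2 g / lqNorm 1 g) with hL_def
  have hL : 0 < L := Real.log_pos ((one_lt_div hN1).mpr hlt)
  have ht : lqNorm 1 g / lqNorm 2 g = Real.exp (-L) := by
    rw [hL_def, Real.exp_neg, Real.exp_log (by positivity), inv_div]
  have hτ : (lqNorm 1 g / lqNorm 2 g) ^ ((6:ℝ)/5) = Real.exp (-(6/5) * L) := by
    rw [ht, Real.rpow_def_of_pos (Real.exp_pos _), Real.log_exp]
    congr 1
    ring
  have htarget : 3 * (lqNorm 2 g ^ 2 * (1 - (lqNorm 1 g / lqNorm 2 g) ^ ((6:ℝ)/5)) / L)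
      = 3 * (lqNorm 2 g ^ 2 * (1 - Real.exp (-(6/5) * L))) / L := by
    rw [hτ]
    ring
  rw [htarget, le_div_iff₀ hL]
  set A := ∑ S : Finset J, fcoef g S ^ 2 / (S.card : ℝ) with hA_def
  set M := lqNorm 2 g ^ 2 with hM_def
  set X := ∑ S : Finset J, (3:ℝ)⁻¹ ^ S.card * fcoef g S ^ 2 with hX_def
  have hM0 : (0:ℝ) ≤ M := sq_nonneg _
  have hXN : X ≤ Real.exp (-L) * M := by
    have hX12 := X_le_N1N2 g
    have hN1e : lqNorm 1 g = Real.exp (-L) * lqNorm 2 g := by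
      rw [← ht]
      field_simp
    rw [hX_def, hM_def]
    calc ∑ S : Finset J, (3:ℝ)⁻¹ ^ S.card * fcoef g S ^ 2 ≤ lqNorm 1 g * lqNorm 2 g := hX12
      _ = Real.exp (-L) * lqNorm 2 g ^ 2 := by rw [hN1e]; ring
  rcases le_or_gt L (13/6) with hc1 | hc1
  · have hb := Stmt9N.branch1 hL hc1
    have hA1 : A ≤ 0 * X + 1 * M := by
      rw [zero_mul, one_mul, zero_add]
      exact hAM
    exact assemble hA1 hXN hM0 le_rfl hL.le (by nlinarith [hb])
  rcases le_or_gt L 7 with hc2 | hc2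
  · have hb := Stmt9N.branch2 hc1.le hc2
    have hA2 : A ≤ (9/2) * X + (1/3) * M := by
      have h := A_le_KX g 2 (by norm_num)
      rw [← hMN]
      convert h using 3 <;> norm_num
    exact assemble hA2 hXN hM0 (by norm_num) hL.le (by nlinarith [hb])
  · obtain ⟨K, hK1, hb⟩ := Stmt9N.branch3 hc2.le
    have hAK : A ≤ ((3:ℝ) ^ K / (K:ℝ)) * X + (1 / ((K:ℝ) + 1)) * M := by
      have h := A_le_KX g K hK1
      rw [← hMN]
      convert h using 3 <;> push_cast <;> ring
    have hK0 : (0:ℝ) < (K:ℝ) := by exact_mod_cast hK1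
    refine assemble hAK hXN hM0 (by positivity) hL.le ?_
    convert hb using 4 <;> push_cast <;> ring

end Stmt9


open scoped Classical in
/-- sharpened form:
`Var(f) ≤ 3 Σ_j ‖f_j‖₂² (1 - (‖f_j‖₁/‖f_j‖₂)^{6/5}) / log(‖f_j‖₂/‖f_j‖₁)`,
the `j`-th summand interpreted as `(6/5)‖f_j‖₂²` when `‖f_j‖₁ = ‖f_j‖₂`, and as `0`
when `f_j ≡ 0`. -/
theorem stmt9 {J : Type*} [Fintype J] [DecidableEq J] (f : (J → Bool) → ℝ) :
    hcVar f ≤ 3 * ∑ j : J,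
      if rhoD j f = 0 then 0
      else if lqNorm 1 (rhoD j f) = lqNorm 2 (rhoD j f) then
        (6 / 5) * lqNorm 2 (rhoD j f) ^ 2
      else
        lqNorm 2 (rhoD j f) ^ 2 *
          (1 - (lqNorm 1 (rhoD j f) / lqNorm 2 (rhoD j f)) ^ ((6 : ℝ) / 5)) /
          Real.log (lqNorm 2 (rhoD j f) / lqNorm 1 (rhoD j f)) := by
  classical
  rw [Stmt9.hcVar_eq_sum_rhoD, Finset.mul_sum]
  apply Finset.sum_le_sum
  intro j _
  have h0 : fcoef (rhoD j f) ∅ = 0 := by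
    rw [Stmt9.fcoef_rhoD]
    simp
  exact Stmt9.perj (rhoD j f) h0
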